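/- Let f : ℤ_p → ℤ_p be a 1-Lipschitz bijection that is additive and also a homomorphism with respect to coordinate-wise AND (f(x AND y) = f(x) AND f(y)), where (x AND y)_k = (x_k · y_k) mod p on canonical digits. Then f is the identity map. -/

import Mathlib

/-- The `k`-th digit of the canonical `p`-adic expansion of `x`. -/
noncomputable def padicDigit (p : ℕ) [Fact p.Prime] (x : ℤ_[p]) (k : ℕ) : ℕ :=
  x.appr (k + 1) / p ^ k % p

/-- Coordinate-wise AND (digit-wise multiplication mod p) on `ℤ_[p]`. -/
noncomputable def pAnd (p : ℕ) [Fact p.Prime] (x y : ℤ_[p]) : ℤ_[p] :=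
  ∑' k : ℕ, (((padicDigit p x k * padicDigit p y k) % p : ℕ) : ℤ_[p]) * (p : ℤ_[p]) ^ k

section aux

variable {p : ℕ} [hp : Fact p.Prime]

lemma digit_lt (x : ℤ_[p]) (k : ℕ) : padicDigit p x k < p :=
  Nat.mod_lt _ hp.out.pos

lemma aux_summable (a : ℕ → ℕ) :
    Summable (fun k : ℕ => ((a k : ℤ_[p])) * (p : ℤ_[p]) ^ k) := by
  apply Summable.of_norm_bounded (g := fun k : ℕ => ((p : ℝ)⁻¹) ^ k)
  · apply summable_geometric_of_lt_one (by positivity)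
    rw [inv_lt_one_iff₀]
    right
    exact_mod_cast hp.out.one_lt
  · intro k
    calc ‖(a k : ℤ_[p]) * (p : ℤ_[p]) ^ k‖ ≤ ‖(a k : ℤ_[p])‖ * ‖(p : ℤ_[p]) ^ k‖ :=
          norm_mul_le _ _
      _ ≤ 1 * ((p : ℝ)⁻¹) ^ k := by
          apply mul_le_mul (PadicInt.norm_le_one _) _ (norm_nonneg _) zero_le_one
          rw [PadicInt.norm_p_pow, zpow_neg, zpow_natCast, ← inv_pow]
      _ = ((p : ℝ)⁻¹) ^ k := one_mul _

lemma appr_succ (x : ℤ_[p]) (n : ℕ) :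
    x.appr (n + 1) = x.appr n + padicDigit p x n * p ^ n := by
  have hd : p ^ n ∣ x.appr (n + 1) - x.appr n :=
    PadicInt.dvd_appr_sub_appr x n (n + 1) (Nat.le_succ n)
  have hmono : x.appr n ≤ x.appr (n + 1) := PadicInt.appr_mono x (Nat.le_succ n)
  obtain ⟨c, hc⟩ := hd
  have hsum : x.appr (n + 1) = x.appr n + p ^ n * c := by omega
  have hcp : c < p := by
    have h1 : x.appr (n + 1) < p ^ (n + 1) := PadicInt.appr_lt x (n + 1)
    by_contra hcon
    push_neg at hcon
    have : p ^ (n + 1) ≤ p ^ n * c := by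
      rw [pow_succ]
      exact Nat.mul_le_mul_left _ hcon
    omega
  have happr : x.appr n < p ^ n := PadicInt.appr_lt x n
  have : padicDigit p x n = c := by
    unfold padicDigit
    rw [hsum, Nat.add_mul_div_left _ _ (pow_pos hp.out.pos n),
      Nat.div_eq_of_lt happr, Nat.zero_add, Nat.mod_eq_of_lt hcp]
  rw [this, hsum, Nat.mul_comm]

lemma appr_eq_sum (x : ℤ_[p]) (n : ℕ) :
    x.appr n = ∑ k ∈ Finset.range n, padicDigit p x k * p ^ k := by
  induction n with
  | zero =>
    have := PadicInt.appr_lt x 0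
    simpa using Nat.lt_one_iff.mp (by simpa using this)
  | succ n ih =>
    rw [Finset.sum_range_succ, ← ih, appr_succ]

lemma tendsto_appr (x : ℤ_[p]) :
    Filter.Tendsto (fun n : ℕ => ((x.appr n : ℕ) : ℤ_[p])) Filter.atTop (nhds x) := by
  rw [NormedAddCommGroup.tendsto_atTop]
  intro ε hε
  obtain ⟨n0, hn0⟩ := exists_pow_lt_of_lt_one hε
    (show (p : ℝ)⁻¹ < 1 by
      rw [inv_lt_one_iff₀]; right; exact_mod_cast hp.out.one_lt)
  refine ⟨n0, fun n hn => ?_⟩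
  have hspec := PadicInt.appr_spec n x
  have hnorm : ‖x - x.appr n‖ ≤ (p : ℝ) ^ (-(n : ℤ)) :=
    ((x - x.appr n).norm_le_pow_iff_mem_span_pow n).mpr hspec
  rw [← norm_neg, neg_sub]
  calc ‖x - (x.appr n : ℤ_[p])‖ ≤ (p : ℝ) ^ (-(n : ℤ)) := hnorm
    _ = ((p : ℝ)⁻¹) ^ n := by
        rw [zpow_neg, inv_pow, zpow_natCast]
    _ ≤ ((p : ℝ)⁻¹) ^ n0 := by
        apply pow_le_pow_of_le_one (by positivity) _ hn
        rw [inv_le_one_iff₀]; right; exact_mod_cast hp.out.one_le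
    _ < ε := hn0

lemma digit_reconstruct (x : ℤ_[p]) :
    ∑' k : ℕ, ((padicDigit p x k : ℤ_[p])) * (p : ℤ_[p]) ^ k = x := by
  have hsum := (aux_summable (p := p) (fun k => padicDigit p x k)).hasSum
  have h1 := hsum.tendsto_sum_nat
  have h2 : (fun n : ℕ => ∑ k ∈ Finset.range n,
      ((padicDigit p x k : ℤ_[p])) * (p : ℤ_[p]) ^ k)
      = fun n : ℕ => ((x.appr n : ℕ) : ℤ_[p]) := by
    funext n
    rw [appr_eq_sum]
    push_cast
    rfl
  rw [h2] at h1
  exact tendsto_nhds_unique h1 (tendsto_appr x)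

lemma appr_unique (x : ℤ_[p]) (n : ℕ) (m : ℕ) (hm : m < p ^ n)
    (h : x - m ∈ Ideal.span {(p : ℤ_[p]) ^ n}) : x.appr n = m := by
  have h1 : ((x.appr n : ℕ) : ZMod (p ^ n)) = ((m : ℕ) : ZMod (p ^ n)) :=
    PadicInt.zmod_congr_of_sub_mem_span n x _ _ (PadicInt.appr_spec n x) h
  rw [ZMod.natCast_eq_natCast_iff] at h1
  have h2 : x.appr n % p ^ n = m % p ^ n := h1
  rw [Nat.mod_eq_of_lt (PadicInt.appr_lt x n), Nat.mod_eq_of_lt hm] at h2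
  exact h2

end aux

section eSec

variable {p : ℕ} [hp : Fact p.Prime]

lemma norm_p_lt_one : ‖(p : ℤ_[p])‖ < 1 := by
  rw [PadicInt.norm_p, inv_lt_one_iff₀]
  right
  exact_mod_cast hp.out.one_lt

/-- The element with all digits equal to 1, i.e. `(1-p)⁻¹`. -/
noncomputable def eAll (p : ℕ) [Fact p.Prime] : ℤ_[p] :=
  ((Units.oneSub (p : ℤ_[p]) norm_p_lt_one)⁻¹ : ℤ_[p]ˣ)

lemma eAll_spec : (1 - (p : ℤ_[p])) * eAll p = 1 := by
  have := (Units.oneSub (p : ℤ_[p]) norm_p_lt_one).mul_inv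
  simpa [eAll, Units.oneSub] using this

lemma appr_eAll (n : ℕ) : (eAll p).appr n = ∑ k ∈ Finset.range n, p ^ k := by
  apply appr_unique
  · -- ∑_{k<n} p^k < p^n
    induction n with
    | zero => simp
    | succ n ih =>
      rw [Finset.sum_range_succ, pow_succ]
      have h2 : 2 ≤ p := hp.out.two_le
      nlinarith [pow_pos hp.out.pos n]
  · rw [Ideal.mem_span_singleton]
    refine ⟨eAll p, ?_⟩
    have hgeom : ((∑ k ∈ Finset.range n, p ^ k : ℕ) : ℤ_[p])
        = ∑ k ∈ Finset.range n, (p : ℤ_[p]) ^ k := by push_cast; rfl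
    have hmul : (1 - (p : ℤ_[p])) * ∑ k ∈ Finset.range n, (p : ℤ_[p]) ^ k
        = 1 - (p : ℤ_[p]) ^ n := by
      have := geom_sum_mul (p : ℤ_[p]) n
      ring_nf
      ring_nf at this
      linear_combination -this
    rw [hgeom]
    linear_combination (∑ k ∈ Finset.range n, (p : ℤ_[p]) ^ k) * eAll_spec (p := p)
      - eAll p * hmul

lemma digit_eAll (k : ℕ) : padicDigit p (eAll p) k = 1 := by
  unfold padicDigit
  rw [appr_eAll, Finset.sum_range_succ]
  have hlt : ∑ j ∈ Finset.range k, p ^ j < p ^ k := by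
    induction k with
    | zero => simp
    | succ n ih =>
      rw [Finset.sum_range_succ, pow_succ]
      have h2 : 2 ≤ p := hp.out.two_le
      nlinarith [pow_pos hp.out.pos n]
  rw [Nat.add_div_right _ (pow_pos hp.out.pos k)] at *
  rw [Nat.div_eq_of_lt hlt]
  exact Nat.mod_eq_of_lt hp.out.one_lt

lemma pAnd_eAll_left (y : ℤ_[p]) : pAnd p (eAll p) y = y := by
  unfold pAnd
  have h : ∀ k : ℕ, (padicDigit p (eAll p) k * padicDigit p y k) % p = padicDigit p y k := by
    intro k
    rw [digit_eAll, one_mul]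
    exact Nat.mod_eq_of_lt (digit_lt y k)
  simp only [h]
  exact digit_reconstruct y

lemma pAnd_eAll_right (y : ℤ_[p]) : pAnd p y (eAll p) = y := by
  unfold pAnd
  have h : ∀ k : ℕ, (padicDigit p y k * padicDigit p (eAll p) k) % p = padicDigit p y k := by
    intro k
    rw [digit_eAll, mul_one]
    exact Nat.mod_eq_of_lt (digit_lt y k)
  simp only [h]
  exact digit_reconstruct y

end eSec

theorem stmt_15 (p : ℕ) [Fact p.Prime] (f : ℤ_[p] → ℤ_[p])
    (hlip : ∀ x y : ℤ_[p], ‖f x - f y‖ ≤ ‖x - y‖)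
    (hadd : ∀ x y : ℤ_[p], f (x + y) = f x + f y)
    (hand : ∀ x y : ℤ_[p], f (pAnd p x y) = pAnd p (f x) (f y))
    (hbij : Function.Bijective f) :
    ∀ x : ℤ_[p], f x = x := by
  -- f is continuous
  have hcont : Continuous f := by
    apply LipschitzWith.continuous (K := 1)
    apply LipschitzWith.of_dist_le_mul
    intro x y
    rw [NNReal.coe_one, one_mul, dist_eq_norm, dist_eq_norm]
    exact hlip x y
  -- f is linear: f x = f 1 * x
  have hlin : ∀ x : ℤ_[p], f x = f 1 * x := by
    have hg : Continuous (fun x : ℤ_[p] => f 1 * x) := by continuity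
    have hnat : ∀ n : ℕ, f (n : ℤ_[p]) = f 1 * n := by
      intro n
      induction n with
      | zero =>
        have h0 : f 0 = 0 := by have := hadd 0 0; simpa using this
        simpa using h0
      | succ n ih =>
        push_cast
        rw [hadd, ih]
        ring
    have key : f = fun x : ℤ_[p] => f 1 * x :=
      PadicInt.denseRange_natCast.equalizer hcont hg (funext fun n => hnat n)
    exact fun x => congrFun key x
  -- f (eAll p) = eAll p
  have hfe : f (eAll p) = eAll p := by
    obtain ⟨x, hx⟩ := hbij.2 (eAll p)
    have h := hand x (eAll p)
    rw [pAnd_eAll_right, hx, pAnd_eAll_left] at h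
    exact h.symm
  -- f 1 = 1
  have hone : f 1 = 1 := by
    have h := hlin (eAll p)
    rw [hfe] at h
    have hunit : IsUnit (eAll p) := (Units.oneSub (p : ℤ_[p]) norm_p_lt_one)⁻¹.isUnit
    have hne : eAll p ≠ 0 := hunit.ne_zero
    have : (f 1 - 1) * eAll p = 0 := by rw [sub_mul, one_mul, ← h]; ring
    rcases mul_eq_zero.mp this with h' | h'
    · exact sub_eq_zero.mp h'
    · exact absurd h' hne
  intro x
  rw [hlin x, hone, one_mul]
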